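/- arXiv:1108.3253 — 4 statements merged into one kernel-verified Lean document; each statement's English description precedes it below -/
import Mathlib

section
/- If B is first countable and p : E → B is an arc-covering with E a Peano space (connected and locally path-connected), then p satisfies: for every e₀ ∈ E and open U ∋ e₀ there is a neighborhood V of p(e₀) in B whose path component of p⁻¹(V) at e₀ lies in U (i.e., p is an arc-hedgehog covering). -/
open unitInterval Topology

set_option linter.unnecessarySimpa false

universe u v w

/-- `p : E → B` is an arc-covering: unique lifting of paths given the initial point. -/
def IsArcCovering {E : Type*} {B : Type*} [TopologicalSpace E] [TopologicalSpace B]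
    (p : C(E, B)) : Prop :=
  ∀ (e₀ : E) (f : C(I, B)), f 0 = p e₀ →
    ∃! g : C(I, E), p.comp g = f ∧ g 0 = e₀

/-- The relation identifying the wedge points of a wedge of copies of `(A, a₀)` indexed by `S`. -/
def wedgeRel (S A : Type*) (a₀ : A) (x y : S × A) : Prop :=
  x = y ∨ (x.2 = a₀ ∧ y.2 = a₀)

/-- The wedge (one-point union) of copies of `(A, a₀)` indexed by `S`. -/
def Wedge (S A : Type*) (a₀ : A) : Type _ :=
  Quot (wedgeRel S A a₀)

/-- The topology of a directed wedge: a set is open iff its trace on each copy of `A`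
is open, and if it contains the wedge point then it contains all copies of `A`
beyond some index. -/
instance Wedge.instTopologicalSpace (S A : Type*) (a₀ : A) [Preorder S]
    [IsDirected S (· ≤ ·)] [TopologicalSpace A] : TopologicalSpace (Wedge S A a₀) where
  IsOpen U := (∀ s : S, IsOpen {a : A | Quot.mk (wedgeRel S A a₀) (s, a) ∈ U}) ∧
    ((∃ s : S, Quot.mk (wedgeRel S A a₀) (s, a₀) ∈ U) →
      ∃ t : S, ∀ s : S, t < s → ∀ a : A, Quot.mk (wedgeRel S A a₀) (s, a) ∈ U)
  isOpen_univ := by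
    refine ⟨fun s => ?_, fun h => ?_⟩
    · exact isOpen_univ (X := A)
    · obtain ⟨s, -⟩ := h
      exact ⟨s, fun _ _ _ => trivial⟩
  isOpen_inter := by
    rintro U V ⟨hU1, hU2⟩ ⟨hV1, hV2⟩
    refine ⟨fun s => (hU1 s).inter (hV1 s), fun h => ?_⟩
    obtain ⟨tU, htU⟩ := hU2 ⟨h.choose, h.choose_spec.1⟩
    obtain ⟨tV, htV⟩ := hV2 ⟨h.choose, h.choose_spec.2⟩
    obtain ⟨t, ht1, ht2⟩ := directed_of (· ≤ ·) tU tV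
    exact ⟨t, fun s hs a => ⟨htU s (lt_of_le_of_lt ht1 hs) a, htV s (lt_of_le_of_lt ht2 hs) a⟩⟩
  isOpen_sUnion := by
    intro C hC
    constructor
    · intro s
      have : {a : A | Quot.mk (wedgeRel S A a₀) (s, a) ∈ ⋃₀ C} =
          ⋃ U ∈ C, {a : A | Quot.mk (wedgeRel S A a₀) (s, a) ∈ U} := by
        ext a
        simp only [Set.mem_setOf_eq, Set.mem_sUnion, Set.mem_iUnion, exists_prop]
        exact Iff.rfl
      rw [this]
      exact isOpen_biUnion fun U hU => (hC U hU).1 s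
    · rintro ⟨s, hs⟩
      obtain ⟨U, hUC, hsU⟩ := hs
      obtain ⟨t, ht⟩ := (hC U hUC).2 ⟨s, hsU⟩
      exact ⟨t, fun s' hs' a => ⟨U, hUC, ht s' hs' a⟩⟩

/-- An arc-hedgehog over a directed set `S`: the directed wedge of copies of `([0,1], 0)`. -/
def ArcHedgehog (S : Type*) : Type _ := Wedge S I 0

instance (S : Type*) [Preorder S] [IsDirected S (· ≤ ·)] : TopologicalSpace (ArcHedgehog S) :=
  Wedge.instTopologicalSpace S I 0

/-- `p` is an arc-hedgehog covering: maps from arc-hedgehogs lift uniquely. -/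
def IsArcHedgehogCovering {E : Type*} {B : Type*} [TopologicalSpace E] [TopologicalSpace B]
    (p : C(E, B)) : Prop :=
  ∀ (S : Type u) [Preorder S] [IsDirected S (· ≤ ·)],
    ∀ (e₀ : E) (f : C(ArcHedgehog S, B)) (z₀ : ArcHedgehog S), f z₀ = p e₀ →
      ∃! g : C(ArcHedgehog S, E), p.comp g = f ∧ g z₀ = e₀

/-- The closed unit `2`-disk. -/
noncomputable def Disk : Type := Metric.closedBall (0 : EuclideanSpace ℝ (Fin 2)) 1

noncomputable instance : TopologicalSpace Disk := by unfold Disk; infer_instance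

/-- The center of the disk. -/
noncomputable def Disk.center : Disk := ⟨0, by simp⟩

/-- A disk-hedgehog over a directed set `S`: the directed wedge of copies of the pointed disk. -/
def DiskHedgehog (S : Type*) : Type _ := Wedge S Disk Disk.center

noncomputable instance (S : Type*) [Preorder S] [IsDirected S (· ≤ ·)] : TopologicalSpace (DiskHedgehog S) :=
  Wedge.instTopologicalSpace S Disk Disk.center

/-- `p` is a disk-hedgehog covering: maps from disk-hedgehogs lift uniquely. -/
def IsDiskHedgehogCovering {E : Type*} {B : Type*} [TopologicalSpace E] [TopologicalSpace B]
    (p : C(E, B)) : Prop :=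
  ∀ (S : Type u) [Preorder S] [IsDirected S (· ≤ ·)],
    ∀ (e₀ : E) (f : C(DiskHedgehog S, B)) (z₀ : DiskHedgehog S), f z₀ = p e₀ →
      ∃! g : C(DiskHedgehog S, E), p.comp g = f ∧ g z₀ = e₀

/-- `p` is a disk-covering: maps from the closed `2`-disk lift uniquely. -/
def IsDiskCovering {E : Type*} {B : Type*} [TopologicalSpace E] [TopologicalSpace B]
    (p : C(E, B)) : Prop :=
  ∀ (e₀ : E) (f : C(Disk, B)) (d₀ : Disk), f d₀ = p e₀ →
    ∃! g : C(Disk, E), p.comp g = f ∧ g d₀ = e₀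

/-- Path components of preimages of neighborhoods form a neighborhood basis of the
total space. -/
def HedgehogBasisCondition {E : Type*} {B : Type*} [TopologicalSpace E] [TopologicalSpace B]
    (p : C(E, B)) : Prop :=
  ∀ (e₀ : E) (U : Set E), IsOpen U → e₀ ∈ U →
    ∃ V ∈ 𝓝 (p e₀), {y : E | JoinedIn (p ⁻¹' V) e₀ y} ⊆ U

/-- The monodromy relation on loops at `b₀`: two loops are identified iff any two of
their lifts starting at the same point end at the same point. -/
def MonodromyRel {E : Type*} {B : Type*} [TopologicalSpace E] [TopologicalSpace B]
    (p : C(E, B)) (b₀ : B) (α β : Path b₀ b₀) : Prop :=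
  ∀ g h : C(I, E), (∀ t, p (g t) = α t) → (∀ t, p (h t) = β t) →
    g 0 = h 0 → g 1 = h 1

/-- `p` is regular: for each loop in `B`, all lifts are loops or all lifts are non-loops. -/
def IsRegularCovering {E : Type*} {B : Type*} [TopologicalSpace E] [TopologicalSpace B]
    (p : C(E, B)) : Prop :=
  ∀ (b : B) (α : Path b b) (g h : C(I, E)),
    (∀ t, p (g t) = α t) → (∀ t, p (h t) = α t) → g 0 = g 1 → h 0 = h 1

section AuxCat
open Set Filter


noncomputable def catIdx (t : ℝ) : ℕ := ⌊(1 - t)⁻¹⌋₊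

noncomputable def catScl (t : ℝ) : I :=
  Set.projIcc 0 1 zero_le_one
    ((t - (1 - ((catIdx t : ℝ))⁻¹)) * (catIdx t * (catIdx t + 1)))

noncomputable def catFun {B : Type*} [TopologicalSpace B] (α : ℕ → C(I, B)) (b₀ : B) (t : ℝ) : B :=
  if t < 1 then α (catIdx t) (catScl t) else b₀

lemma catIdx_eq (n : ℕ) (hn : 1 ≤ n) {t : ℝ} (h1 : 1 - (n : ℝ)⁻¹ ≤ t)
    (h2 : t < 1 - ((n : ℝ) + 1)⁻¹) : catIdx t = n := by
  have hn0 : (0:ℝ) < n := by exact_mod_cast hn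
  have hu1 : ((n:ℝ)+1)⁻¹ < 1 - t := by linarith
  have hu2 : 1 - t ≤ (n:ℝ)⁻¹ := by linarith
  have hupos : (0:ℝ) < 1 - t := lt_trans (by positivity) hu1
  have hle : (n:ℝ) ≤ (1-t)⁻¹ := by
    rw [le_inv_comm₀ hn0 hupos]; exact hu2
  have hlt : (1-t)⁻¹ < (n:ℝ)+1 := by
    rw [inv_lt_comm₀ hupos (by positivity)]; exact hu1
  rw [catIdx, Nat.floor_eq_iff (by positivity)]
  exact ⟨hle, by exact_mod_cast hlt⟩

lemma aux_len (n : ℕ) (hn : 1 ≤ n) :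
    ((n:ℝ)⁻¹ - ((n:ℝ)+1)⁻¹) * ((n:ℝ) * ((n:ℝ)+1)) = 1 := by
  have hn0 : (0:ℝ) < n := by exact_mod_cast hn
  field_simp
  ring

lemma iMap_mem (n : ℕ) (hn : 1 ≤ n) (s : I) :
    (1 - (n:ℝ)⁻¹) + s * ((n:ℝ)⁻¹ - ((n:ℝ)+1)⁻¹) ∈ Set.Icc (0:ℝ) 1 := by
  have hn0 : (0:ℝ) < n := by exact_mod_cast hn
  have h1 : ((n:ℝ)+1)⁻¹ < (n:ℝ)⁻¹ := by
    apply inv_strictAnti₀ hn0; linarith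
  have h2 : (n:ℝ)⁻¹ ≤ 1 := by
    rw [inv_le_one_iff₀]; right; exact_mod_cast hn
  have h3 : (0:ℝ) < ((n:ℝ)+1)⁻¹ := by positivity
  have hs0 : (0:ℝ) ≤ s := s.2.1
  have hs1 : (s:ℝ) ≤ 1 := s.2.2
  refine ⟨by nlinarith, by nlinarith⟩

lemma catFun_eval {B : Type*} [TopologicalSpace B] (α : ℕ → C(I, B)) (b₀ : B)
    (hα0 : ∀ n, α n 0 = b₀) (hα1 : ∀ n, α n 1 = b₀) (n : ℕ) (hn : 1 ≤ n) (s : I) :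
    catFun α b₀ ((1 - (n:ℝ)⁻¹) + s * ((n:ℝ)⁻¹ - ((n:ℝ)+1)⁻¹)) = α n s := by
  have hn0 : (0:ℝ) < n := by exact_mod_cast hn
  have hL : (0:ℝ) < (n:ℝ)⁻¹ - ((n:ℝ)+1)⁻¹ := by
    have : ((n:ℝ)+1)⁻¹ < (n:ℝ)⁻¹ := by apply inv_strictAnti₀ hn0; linarith
    linarith
  have hpos : (0:ℝ) < ((n:ℝ)+1)⁻¹ := by positivity
  set t : ℝ := (1 - (n:ℝ)⁻¹) + s * ((n:ℝ)⁻¹ - ((n:ℝ)+1)⁻¹) with ht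
  have hs0 : (0:ℝ) ≤ s := s.2.1
  have hs1 : (s:ℝ) ≤ 1 := s.2.2
  rcases eq_or_lt_of_le hs1 with he | hlt
  · -- s = 1, t = 1 - (n+1)⁻¹
    have hteq : t = 1 - ((n:ℝ)+1)⁻¹ := by rw [ht, he]; ring
    have ht1 : t < 1 := by rw [hteq]; linarith
    have hidx : catIdx t = n + 1 := by
      apply catIdx_eq (n+1) (by omega)
      · push_cast; rw [hteq]
      · push_cast; rw [hteq]
        have h1 : ((n:ℝ)+1+1)⁻¹ < ((n:ℝ)+1)⁻¹ := by
          apply inv_strictAnti₀ (by positivity); linarith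
        linarith
    have hscl : catScl t = 0 := by
      rw [catScl, hidx]
      have h0 : (t - (1 - ((↑(n+1) : ℝ))⁻¹)) = 0 := by push_cast; rw [hteq]; ring
      rw [h0, zero_mul]
      simp
    have hseq : s = 1 := Subtype.ext (by simpa using he)
    rw [catFun, if_pos ht1, hidx, hscl, hα0, hseq, hα1]
  · -- s < 1
    have hta : 1 - (n:ℝ)⁻¹ ≤ t := by nlinarith
    have htb : t < 1 - ((n:ℝ)+1)⁻¹ := by rw [ht]; nlinarith
    have ht1 : t < 1 := lt_trans htb (by linarith)
    have hidx : catIdx t = n := catIdx_eq n hn hta htb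
    have hval : (t - (1 - (n:ℝ)⁻¹)) * ((n:ℝ) * ((n:ℝ)+1)) = s := by
      rw [ht]
      nlinarith [aux_len n hn]
    have hscl : catScl t = s := by
      rw [catScl, hidx, hval]
      exact Set.projIcc_val zero_le_one s
    rw [catFun, if_pos ht1, hidx, hscl]

/-- The continuous candidate on the `n`-th interval. -/
noncomputable def catCand {B : Type*} [TopologicalSpace B] (α : ℕ → C(I, B)) (n : ℕ) (t : ℝ) : B :=
  α n (Set.projIcc 0 1 zero_le_one ((t - (1 - (n:ℝ)⁻¹)) * ((n:ℝ) * ((n:ℝ)+1))))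

lemma catCand_continuous {B : Type*} [TopologicalSpace B] (α : ℕ → C(I, B)) (n : ℕ) :
    Continuous (catCand α n) :=
  (α n).continuous.comp (continuous_projIcc.comp (by continuity))

lemma catFun_eq_cand {B : Type*} [TopologicalSpace B] (α : ℕ → C(I, B)) (b₀ : B)
    (n : ℕ) (hn : 1 ≤ n) {t : ℝ} (h1 : 1 - (n : ℝ)⁻¹ ≤ t) (h2 : t < 1 - ((n : ℝ) + 1)⁻¹) :
    catFun α b₀ t = catCand α n t := by
  have ht1 : t < 1 := lt_trans h2 (by
    have : (0:ℝ) < ((n:ℝ)+1)⁻¹ := by positivity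
    linarith)
  have hidx := catIdx_eq n hn h1 h2
  rw [catFun, if_pos ht1, catScl, hidx, catCand]

lemma catFun_neg {B : Type*} [TopologicalSpace B] (α : ℕ → C(I, B)) (b₀ : B)
    (hα0 : ∀ n, α n 0 = b₀) {t : ℝ} (ht : t < 0) : catFun α b₀ t = b₀ := by
  have hidx : catIdx t = 0 := by
    rw [catIdx, Nat.floor_eq_zero]
    rw [inv_lt_one_iff₀]; right; linarith
  rw [catFun, if_pos (by linarith), catScl, hidx]
  norm_num
  exact hα0 0

lemma catFun_one {B : Type*} [TopologicalSpace B] (α : ℕ → C(I, B)) (b₀ : B) :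
    catFun α b₀ 1 = b₀ := by
  rw [catFun, if_neg (lt_irrefl 1)]

lemma catIdx_bounds {t : ℝ} (h0 : 0 ≤ t) (h1 : t < 1) :
    1 ≤ catIdx t ∧ 1 - ((catIdx t : ℝ))⁻¹ ≤ t ∧ t < 1 - ((catIdx t : ℝ) + 1)⁻¹ := by
  have hu : (0:ℝ) < 1 - t := by linarith
  have hu1 : 1 - t ≤ 1 := by linarith
  have hinv1 : (1:ℝ) ≤ (1 - t)⁻¹ := by
    rw [le_inv_comm₀ one_pos hu]; simpa using hu1
  have hn1 : 1 ≤ catIdx t := by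
    rw [catIdx]; exact Nat.le_floor (by exact_mod_cast hinv1)
  have hn0 : (0:ℝ) < (catIdx t : ℝ) := by exact_mod_cast hn1
  have hfl : (catIdx t : ℝ) ≤ (1 - t)⁻¹ := Nat.floor_le (by positivity)
  have hfu : (1 - t)⁻¹ < (catIdx t : ℝ) + 1 := Nat.lt_floor_add_one _
  refine ⟨hn1, ?_, ?_⟩
  · have : 1 - t ≤ ((catIdx t : ℝ))⁻¹ := by
      rw [← le_inv_comm₀ hn0 hu]; exact hfl
    linarith
  · have : ((catIdx t : ℝ) + 1)⁻¹ < 1 - t :=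
      (inv_lt_comm₀ hu (by positivity)).mp hfu
    linarith

lemma catFun_continuous {B : Type*} [TopologicalSpace B] (α : ℕ → C(I, B)) (b₀ : B)
    (hα0 : ∀ n, α n 0 = b₀) (hα1 : ∀ n, α n 1 = b₀)
    (V : ℕ → Set B) (hV : ∀ n, V n ∈ 𝓝 b₀) (hVanti : Antitone V)
    (hrange : ∀ n, 1 ≤ n → ∀ s : I, α n s ∈ V n) :
    ∀ t₀ : ℝ, (t₀ ≠ 1 → ContinuousAt (catFun α b₀) t₀) ∧
      (t₀ = 1 → ∀ W ∈ 𝓝 b₀, (∃ k, V k ⊆ W) → catFun α b₀ ⁻¹' W ∈ 𝓝 t₀) := by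
  intro t₀
  constructor
  · intro hne
    rcases lt_or_gt_of_ne hne with h1 | h1
    · -- t₀ < 1
      rcases lt_or_ge t₀ 0 with hneg | hpos
      · -- t₀ < 0
        refine (continuousAt_congr ?_).mpr (continuousAt_const (y := b₀))
        filter_upwards [Iio_mem_nhds hneg] with t ht
        exact catFun_neg α b₀ hα0 ht
      · -- 0 ≤ t₀ < 1
        obtain ⟨hn1, hta, htb⟩ := catIdx_bounds hpos h1
        set n := catIdx t₀ with hn
        clear_value n
        rcases eq_or_lt_of_le hta with heq | hlt
        · -- t₀ = 1 - n⁻¹ : junction point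
          have hright : ContinuousWithinAt (catFun α b₀) (Set.Ici t₀) t₀ := by
            have hcand : ContinuousWithinAt (catCand α n)
                (Set.Ico t₀ (1 - ((n:ℝ)+1)⁻¹)) t₀ :=
              (catCand_continuous α n).continuousWithinAt
            have : ContinuousWithinAt (catFun α b₀)
                (Set.Ico t₀ (1 - ((n:ℝ)+1)⁻¹)) t₀ := by
              refine hcand.congr (fun y hy => ?_) ?_
              · exact catFun_eq_cand α b₀ n hn1 (heq ▸ hy.1) hy.2
              · exact catFun_eq_cand α b₀ n hn1 hta htb
            exact this.mono_of_mem_nhdsWithin (Ico_mem_nhdsGE_of_mem ⟨le_refl _, htb⟩)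
          have hval : catFun α b₀ t₀ = b₀ := by
            rw [catFun_eq_cand α b₀ n hn1 hta htb, catCand, ← heq]
            norm_num
            exact hα0 n
          have hleft : ContinuousWithinAt (catFun α b₀) (Set.Iic t₀) t₀ := by
            rcases eq_or_lt_of_le hn1 with hone | h2n
            · -- n = 1, t₀ = 0
              have ht0 : t₀ = 0 := by rw [← heq, ← hone]; norm_num
              refine (continuousWithinAt_const : ContinuousWithinAt (fun _ : ℝ => b₀) (Set.Iic t₀) t₀).congr (fun y hy => ?_) hval
              rcases eq_or_lt_of_le (Set.mem_Iic.mp hy) with rfl | hy'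
              · exact hval
              · exact catFun_neg α b₀ hα0 (by rw [ht0] at hy'; exact hy')
            · -- n ≥ 2
              obtain ⟨m, rfl⟩ : ∃ m, n = m + 1 := ⟨n - 1, by omega⟩
              have hm1 : 1 ≤ m := by omega
              have hm0 : (0:ℝ) < m := by exact_mod_cast hm1
              have hcast : ((m+1 : ℕ) : ℝ) = (m:ℝ) + 1 := by push_cast; ring
              have hlb : 1 - (m:ℝ)⁻¹ < t₀ := by
                rw [← heq, hcast]
                have : ((m:ℝ)+1)⁻¹ < (m:ℝ)⁻¹ := by
                  apply inv_strictAnti₀ hm0; linarith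
                linarith
              have hcandv : catCand α m t₀ = b₀ := by
                rw [catCand, ← heq, hcast]
                have : (1 - ((m:ℝ) + 1)⁻¹ - (1 - (m:ℝ)⁻¹)) * ((m:ℝ) * ((m:ℝ)+1)) = 1 := by
                  have := aux_len m hm1
                  nlinarith [aux_len m hm1]
                rw [show (1 - ((m:ℝ) + 1)⁻¹ - (1 - (m:ℝ)⁻¹)) = ((m:ℝ)⁻¹ - ((m:ℝ)+1)⁻¹) by ring]
                rw [aux_len m hm1, Set.projIcc_right]
                exact hα1 m
              have hcand : ContinuousWithinAt (catCand α m)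
                  (Set.Ioc (1 - (m:ℝ)⁻¹) t₀) t₀ :=
                (catCand_continuous α m).continuousWithinAt
              have : ContinuousWithinAt (catFun α b₀)
                  (Set.Ioc (1 - (m:ℝ)⁻¹) t₀) t₀ := by
                refine hcand.congr (fun y hy => ?_) (by rw [hval, hcandv])
                rcases eq_or_lt_of_le hy.2 with rfl | hy'
                · rw [hval, hcandv]
                · refine catFun_eq_cand α b₀ m hm1 (le_of_lt hy.1) ?_
                  rw [← heq, hcast] at hy'
                  have : ((m:ℝ)+1)⁻¹ < (m:ℝ)⁻¹ := by
                    apply inv_strictAnti₀ hm0; linarith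
                  calc y < 1 - ((m:ℝ)+1)⁻¹ := by push_cast at hy' ⊢; linarith
                  _ ≤ 1 - ((m:ℝ)+1)⁻¹ := le_refl _
              exact this.mono_of_mem_nhdsWithin (Ioc_mem_nhdsLE_of_mem ⟨hlb, le_refl _⟩)
          have := hleft.union hright
          rwa [Set.Iic_union_Ici, continuousWithinAt_univ] at this
        · -- interior point
          refine (continuousAt_congr ?_).mpr (catCand_continuous α n).continuousAt
          filter_upwards [Ioo_mem_nhds hlt htb] with t ht
          exact catFun_eq_cand α b₀ n hn1 (le_of_lt ht.1) ht.2
    · -- t₀ > 1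
      refine (continuousAt_congr ?_).mpr (continuousAt_const (y := b₀))
      filter_upwards [Ioi_mem_nhds h1] with t ht
      rw [catFun, if_neg (not_lt.mpr (le_of_lt ht))]
  · rintro rfl W hW ⟨k, hkW⟩
    set m := k + 1 with hm
    have hmpos : (0:ℝ) < m := by positivity
    have hsub : Set.Ioi (1 - (m:ℝ)⁻¹) ⊆ catFun α b₀ ⁻¹' W := by
      intro t ht
      simp only [Set.mem_Ioi] at ht
      rcases lt_or_ge t 1 with ht1 | ht1
      · have hu : (0:ℝ) < 1 - t := by linarith
        have hlt : (m:ℝ) < (1 - t)⁻¹ := by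
          rw [lt_inv_comm₀ hmpos hu]
          have h2 : ((k:ℝ)+1)⁻¹ = ((m:ℕ):ℝ)⁻¹ := by rw [hm]; push_cast; ring_nf
          push_cast
          linarith
        have hge : m ≤ catIdx t := Nat.le_floor (le_of_lt (by exact_mod_cast hlt))
        have h1idx : 1 ≤ catIdx t := by omega
        rw [Set.mem_preimage, catFun, if_pos ht1]
        refine hkW (hVanti (by omega : k ≤ catIdx t) ?_)
        exact hrange _ h1idx _
      · rw [Set.mem_preimage, catFun, if_neg (by push_neg; linarith)]
        exact hkW (mem_of_mem_nhds (hV k))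
    exact Filter.mem_of_superset (Ioi_mem_nhds (by linarith [inv_pos.mpr hmpos])) hsub

noncomputable def half : I := ⟨1/2, by norm_num⟩

noncomputable def iMapI (n : ℕ) (s : I) : I :=
  ⟨(1 - ((n+1 : ℕ):ℝ)⁻¹) + s * (((n+1 : ℕ):ℝ)⁻¹ - (((n+1 : ℕ):ℝ)+1)⁻¹),
    iMap_mem (n+1) (Nat.le_add_left 1 n) s⟩

lemma iMapI_continuous (n : ℕ) : Continuous (iMapI n) := by
  apply Continuous.subtype_mk
  exact continuous_const.add (continuous_subtype_val.mul continuous_const)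

noncomputable def AI (n : ℕ) : I :=
  ⟨1 - ((n+1 : ℕ):ℝ)⁻¹, by
    constructor
    · have : ((n+1 : ℕ):ℝ)⁻¹ ≤ 1 := by
        rw [inv_le_one_iff₀]; right; exact_mod_cast Nat.le_add_left 1 n
      linarith
    · have : (0:ℝ) < ((n+1 : ℕ):ℝ)⁻¹ := by positivity
      linarith⟩

lemma iMapI_zero (n : ℕ) : iMapI n 0 = AI n := by
  apply Subtype.ext
  show (1 - ((n+1 : ℕ):ℝ)⁻¹) + ((0 : I) : ℝ) * _ = 1 - ((n+1 : ℕ):ℝ)⁻¹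
  norm_num

lemma iMapI_one (n : ℕ) : iMapI n 1 = AI (n+1) := by
  apply Subtype.ext
  show (1 - ((n+1 : ℕ):ℝ)⁻¹) + ((1 : I) : ℝ) * (((n+1 : ℕ):ℝ)⁻¹ - (((n+1 : ℕ):ℝ)+1)⁻¹)
      = 1 - ((n+2 : ℕ):ℝ)⁻¹
  push_cast
  ring

lemma AI_zero : AI 0 = 0 := by
  apply Subtype.ext
  show 1 - ((1 : ℕ):ℝ)⁻¹ = ((0 : I) : ℝ)
  norm_num

lemma AI_tendsto : Filter.Tendsto AI Filter.atTop (𝓝 (1 : I)) := by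
  rw [tendsto_subtype_rng]
  have h1 : Filter.Tendsto (fun n : ℕ => ((n:ℝ)+1)) Filter.atTop Filter.atTop :=
    Filter.tendsto_atTop_add_const_right _ 1 tendsto_natCast_atTop_atTop
  have h2 : Filter.Tendsto (fun n : ℕ => ((n:ℝ)+1)⁻¹) Filter.atTop (𝓝 0) :=
    h1.inv_tendsto_atTop
  have := tendsto_const_nhds (x := (1:ℝ)) (f := Filter.atTop (α := ℕ)) |>.sub h2
  simp only [sub_zero] at this
  convert this using 2 with n
  show 1 - ((n+1 : ℕ):ℝ)⁻¹ = _
  push_cast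
  ring
  simp

lemma iMapI_half_tendsto :
    Filter.Tendsto (fun n => iMapI n half) Filter.atTop (𝓝 (1 : I)) := by
  rw [tendsto_subtype_rng]
  have h1 : Filter.Tendsto (fun n : ℕ => ((n:ℝ)+1)) Filter.atTop Filter.atTop :=
    Filter.tendsto_atTop_add_const_right _ 1 tendsto_natCast_atTop_atTop
  have h2 : Filter.Tendsto (fun n : ℕ => ((n:ℝ)+1)⁻¹) Filter.atTop (𝓝 0) :=
    h1.inv_tendsto_atTop
  have h1' : Filter.Tendsto (fun n : ℕ => ((n:ℝ)+2)) Filter.atTop Filter.atTop :=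
    Filter.tendsto_atTop_add_const_right _ 2 tendsto_natCast_atTop_atTop
  have h2' : Filter.Tendsto (fun n : ℕ => ((n:ℝ)+2)⁻¹) Filter.atTop (𝓝 0) :=
    h1'.inv_tendsto_atTop
  have : Filter.Tendsto (fun n : ℕ => 1 - (1/2) * ((n:ℝ)+1)⁻¹ - (1/2) * ((n:ℝ)+2)⁻¹)
      Filter.atTop (𝓝 (1 - (1/2) * 0 - (1/2) * 0)) :=
    ((tendsto_const_nhds.sub (h2.const_mul _)).sub (h2'.const_mul _))
  simp only [mul_zero, sub_zero] at this
  convert this using 2 with n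
  show (1 - ((n+1 : ℕ):ℝ)⁻¹) + (half : ℝ) * (((n+1 : ℕ):ℝ)⁻¹ - (((n+1 : ℕ):ℝ)+1)⁻¹) = _
  have : (half : ℝ) = 1/2 := rfl
  rw [this]
  push_cast
  ring
  simp


end AuxCat

/-- an arc-covering over a first-countable base with Peano total space
satisfies the hedgehog basis condition, i.e. it is an arc-hedgehog covering. -/
theorem arcCovering_firstCountable_basisCondition {E B : Type*} [TopologicalSpace E]
    [TopologicalSpace B] [FirstCountableTopology B]
    [ConnectedSpace E] [LocallyPathConnectedSpace E]
    (p : C(E, B)) (hp : IsArcCovering p) :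
    HedgehogBasisCondition p := by
  classical
  intro e₀ U hU he₀
  by_contra hcon
  push_neg at hcon
  set b₀ := p e₀ with hb₀
  obtain ⟨V, hVbasis⟩ := (𝓝 b₀).exists_antitone_basis
  have hVmem : ∀ n, V n ∈ 𝓝 b₀ := fun n => hVbasis.mem n
  have hVanti : Antitone V := hVbasis.antitone
  have hVb : ∀ W ∈ 𝓝 b₀, ∃ n, V n ⊆ W := by
    intro W hW
    obtain ⟨n, -, hn⟩ := hVbasis.toHasBasis.mem_iff.mp hW
    exact ⟨n, hn⟩
  have hchoice : ∀ n : ℕ, ∃ z : E, JoinedIn (p ⁻¹' V n) e₀ z ∧ z ∉ U := by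
    intro n
    have h := hcon (V n) (hVmem n)
    rw [Set.not_subset] at h
    obtain ⟨z, hz1, hz2⟩ := h
    exact ⟨z, hz1, hz2⟩
  choose y hyJ hyU using hchoice
  choose γ hγmem using hyJ
  set β : ℕ → Path e₀ e₀ := fun n => (γ n).trans (γ n).symm with hβ
  set α : ℕ → C(I, B) := fun n => p.comp (β n).toContinuousMap with hα
  have hα0 : ∀ n, α n 0 = b₀ := by
    intro n
    show p ((β n) 0) = b₀
    rw [(β n).source]
  have hα1 : ∀ n, α n 1 = b₀ := by
    intro n
    show p ((β n) 1) = b₀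
    rw [(β n).target]
  have hrange : ∀ n, 1 ≤ n → ∀ s : I, α n s ∈ V n := by
    intro n _ s
    show p ((β n) s) ∈ V n
    have hmem : (β n) s ∈ Set.range (β n) := Set.mem_range_self s
    rw [hβ] at hmem
    simp only [Path.trans_range, Path.symm_range, Set.union_self] at hmem
    obtain ⟨t, ht⟩ := hmem
    rw [← ht]
    exact hγmem n t
  have hcont : Continuous (catFun α b₀) := by
    rw [continuous_iff_continuousAt]
    intro t
    by_cases ht : t = 1
    · subst ht
      have key := (catFun_continuous α b₀ hα0 hα1 V hVmem hVanti hrange 1).2 rfl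
      unfold ContinuousAt
      rw [catFun_one α b₀, Filter.tendsto_def]
      intro W hW
      exact key W hW (hVb W hW)
    · exact (catFun_continuous α b₀ hα0 hα1 V hVmem hVanti hrange t).1 ht
  set f : C(I, B) := ⟨fun s => catFun α b₀ s, hcont.comp continuous_subtype_val⟩ with hf
  have hf0 : f 0 = p e₀ := by
    show catFun α b₀ ((0 : I) : ℝ) = p e₀
    have h0 : ((0 : I) : ℝ) = (1 - ((1:ℕ):ℝ)⁻¹) + ((0:I) : ℝ) * (((1:ℕ):ℝ)⁻¹ - (((1:ℕ):ℝ)+1)⁻¹) := by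
      norm_num
    rw [h0, catFun_eval α b₀ hα0 hα1 1 le_rfl 0, hα0]
  obtain ⟨g, ⟨hgl, hg0⟩, -⟩ := hp e₀ f hf0
  have hgf : ∀ s : I, p (g s) = f s := fun s => ContinuousMap.congr_fun hgl s
  have key : ∀ n : ℕ, g (AI n) = e₀ → ∀ s : I, g (iMapI n s) = (β (n+1)) s := by
    intro n hAn
    set r : C(I, E) := ⟨fun s => g (iMapI n s), g.continuous.comp (iMapI_continuous n)⟩ with hr
    have hβ0 : (p.comp (β (n+1)).toContinuousMap) 0 = p e₀ := by
      show p ((β (n+1)) 0) = p e₀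
      rw [(β (n+1)).source]
    obtain ⟨g', _, huniq'⟩ := hp e₀ (p.comp (β (n+1)).toContinuousMap) hβ0
    have hlift : p.comp r = p.comp (β (n+1)).toContinuousMap := by
      ext s
      show p (g (iMapI n s)) = p ((β (n+1)) s)
      rw [hgf (iMapI n s)]
      show catFun α b₀ ((iMapI n s : I) : ℝ) = p ((β (n+1)) s)
      have := catFun_eval α b₀ hα0 hα1 (n+1) (Nat.le_add_left 1 n) s
      exact this
    have hstart : r 0 = e₀ := by
      show g (iMapI n 0) = e₀
      rw [iMapI_zero, hAn]
    have h₁ := huniq' r ⟨hlift, hstart⟩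
    have h₂ := huniq' (β (n+1)).toContinuousMap ⟨rfl, (β (n+1)).source⟩
    intro s
    show r s = (β (n+1)) s
    rw [h₁, ← h₂]
    rfl
  have hAe : ∀ n, g (AI n) = e₀ := by
    intro n
    induction n with
    | zero => rw [AI_zero]; exact hg0
    | succ n ih =>
      have h := key n ih 1
      rw [iMapI_one] at h
      rw [h]
      exact (β (n+1)).target
  have hmid : ∀ n, g (iMapI n half) = y (n+1) := by
    intro n
    rw [key n (hAe n) half]
    show ((γ (n+1)).trans (γ (n+1)).symm) half = y (n+1)
    rw [Path.trans_apply]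
    have h12 : (half : ℝ) ≤ 1/2 := le_refl _
    rw [dif_pos h12]
    have harg : (⟨2 * (half : ℝ), (unitInterval.mul_pos_mem_iff two_pos).2
        ⟨half.2.1, h12⟩⟩ : I) = 1 := by
      apply Subtype.ext
      show 2 * (half : ℝ) = ((1 : I) : ℝ)
      rw [show (half : ℝ) = 1/2 from rfl]
      norm_num
    rw [harg]
    exact (γ (n+1)).target
  -- `g 1 = e₀`
  have hspec : ∀ W : Set E, IsOpen W → g 1 ∈ W → e₀ ∈ W := by
    intro W hWo hW1
    have htend : Filter.Tendsto (fun n => g (AI n)) Filter.atTop (𝓝 (g 1)) :=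
      (g.continuous.tendsto 1).comp AI_tendsto
    have hev : ∀ᶠ n in Filter.atTop, g (AI n) ∈ W := htend.eventually_mem (hWo.mem_nhds hW1)
    obtain ⟨n, hn⟩ := hev.exists
    rw [hAe n] at hn
    exact hn
  have hg1 : g 1 = e₀ := by
    set e₁ := g 1 with he₁
    set c : I → E := fun t => if (t : ℝ) < 1 then e₀ else e₁ with hc
    have hccont : Continuous c := by
      rw [continuous_def]
      intro W hWo
      by_cases h1 : e₁ ∈ W
      · have h0 : e₀ ∈ W := hspec W hWo h1
        have : c ⁻¹' W = Set.univ := by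
          ext t
          simp only [Set.mem_preimage, Set.mem_univ, iff_true, hc]
          split_ifs <;> assumption
        rw [this]; exact isOpen_univ
      · by_cases h0 : e₀ ∈ W
        · have : c ⁻¹' W = {t : I | (t : ℝ) < 1} := by
            ext t
            simp only [Set.mem_preimage, Set.mem_setOf_eq, hc]
            split_ifs with ht
            · simp [h0, ht]
            · simp [h1, ht]
          rw [this]
          exact isOpen_Iio.preimage continuous_subtype_val
        · have : c ⁻¹' W = ∅ := by
            ext t
            simp only [Set.mem_preimage, Set.mem_empty_iff_false, iff_false, hc]
            split_ifs with ht
            · exact h0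
            · exact h1
          rw [this]
          exact isOpen_empty
    have hcf : ∀ t : I, p (c t) = b₀ := by
      intro t
      rw [hc]
      dsimp only
      split_ifs with ht
      · rfl
      · show p (g 1) = b₀
        rw [hgf 1]
        show catFun α b₀ ((1 : I) : ℝ) = b₀
        have : ((1 : I) : ℝ) = 1 := rfl
        rw [this, catFun_one]
    obtain ⟨g', -, huniq'⟩ := hp e₀ (ContinuousMap.const I b₀) rfl
    have h₁ := huniq' ⟨c, hccont⟩ ⟨by ext t; exact hcf t, by show c 0 = e₀; simp [hc]⟩
    have h₂ := huniq' (ContinuousMap.const I e₀) ⟨by ext t; rfl, rfl⟩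
    have hval : (⟨c, hccont⟩ : C(I, E)) 1 = (ContinuousMap.const I e₀) 1 := by rw [h₁, ← h₂]
    have hc1 : c 1 = e₁ := by
      show (if ((1 : I) : ℝ) < 1 then e₀ else e₁) = e₁
      rw [if_neg (by norm_num)]
    calc g 1 = c 1 := hc1.symm
      _ = e₀ := hval
  -- final contradiction
  have htend : Filter.Tendsto (fun n => g (iMapI n half)) Filter.atTop (𝓝 e₀) := by
    rw [← hg1]
    exact (g.continuous.tendsto 1).comp iMapI_half_tendsto
  have hev : ∀ᶠ n in Filter.atTop, g (iMapI n half) ∈ U := htend.eventually_mem (hU.mem_nhds he₀)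
  obtain ⟨n, hn⟩ := hev.exists
  rw [hmid n] at hn
  exact hyU (n+1) hn
end

section
/- If p : E → B is an arc-hedgehog covering and E is a Peano space, then every fiber of p is a regular (T₃) zero-dimensional space: for each point x of a fiber F and each closed A ⊆ F with x ∉ A there is a subset of F that is open and closed in F, contains x, and misses A. -/
open unitInterval Topology

set_option linter.unnecessarySimpa false

universe u v w

section WedgeAux
variable {S A : Type*} {a₀ : A} [Preorder S] [IsDirected S (· ≤ ·)] [TopologicalSpace A]

lemma wedge_isOpen_iff (U : Set (Wedge S A a₀)) : IsOpen U ↔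
    (∀ s : S, IsOpen {a : A | Quot.mk (wedgeRel S A a₀) (s, a) ∈ U}) ∧
    ((∃ s : S, Quot.mk (wedgeRel S A a₀) (s, a₀) ∈ U) →
      ∃ t : S, ∀ s : S, t < s → ∀ a : A, Quot.mk (wedgeRel S A a₀) (s, a) ∈ U) := Iff.rfl

lemma wedge_base_eq (s s' : S) :
    Quot.mk (wedgeRel S A a₀) (s, a₀) = Quot.mk (wedgeRel S A a₀) (s', a₀) :=
  Quot.sound (Or.inr ⟨rfl, rfl⟩)

/-- The inclusion of the `s`-th arm. -/
def armMap (s : S) : C(A, Wedge S A a₀) where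
  toFun a := Quot.mk (wedgeRel S A a₀) (s, a)
  continuous_toFun := by
    apply continuous_def.mpr
    intro U hU
    exact ((wedge_isOpen_iff U).mp hU).1 s

lemma wedge_continuous {X : Type*} [TopologicalSpace X] (q : Wedge S A a₀ → X)
    (h1 : ∀ s : S, Continuous fun a => q (Quot.mk (wedgeRel S A a₀) (s, a)))
    (h2 : ∀ U : Set X, IsOpen U →
      (∃ s : S, q (Quot.mk (wedgeRel S A a₀) (s, a₀)) ∈ U) →
      ∃ t : S, ∀ s : S, t < s → ∀ a : A, q (Quot.mk (wedgeRel S A a₀) (s, a)) ∈ U) :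
    Continuous q := by
  rw [continuous_def]
  intro U hU
  rw [wedge_isOpen_iff]
  exact ⟨fun s => (hU.preimage (h1 s)), h2 U hU⟩

end WedgeAux

/-- The retraction `ArcHedgehog PUnit → I`. -/
noncomputable def punitRetract : C(ArcHedgehog PUnit.{u+1}, I) where
  toFun := Quot.lift (fun x => x.2) (by
    rintro x y (rfl | ⟨h1, h2⟩)
    · rfl
    · simp [h1, h2])
  continuous_toFun := by
    apply wedge_continuous
    · intro s; exact continuous_id
    · intro U hU hmem
      exact ⟨PUnit.unit, fun s hs => absurd hs (by simp)⟩

lemma isArcCovering_of_hedgehog {E B : Type u} [TopologicalSpace E] [TopologicalSpace B]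
    (p : C(E, B)) (hp : IsArcHedgehogCovering.{u} p) : IsArcCovering p := by
  intro e₀ f hf0
  set z₀ : ArcHedgehog PUnit.{u+1} := Quot.mk _ (PUnit.unit, 0) with hz₀
  have key := hp PUnit.{u+1} e₀ (f.comp punitRetract) z₀ (by exact hf0)
  obtain ⟨G, ⟨hG1, hG2⟩, hGuniq⟩ := key
  refine ⟨G.comp (armMap PUnit.unit), ⟨?_, ?_⟩, ?_⟩
  · ext t
    have := ContinuousMap.congr_fun hG1 (Quot.mk _ (PUnit.unit, t))
    simpa [armMap, punitRetract] using this.symm ▸ this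
  · exact hG2
  · intro g ⟨hg1, hg2⟩
    have : g.comp punitRetract.{u} = G := by
      apply hGuniq
      constructor
      · ext z
        induction z using Quot.ind with
        | _ x =>
          have := ContinuousMap.congr_fun hg1 x.2
          exact this
      · exact hg2
    ext t
    have := ContinuousMap.congr_fun this (Quot.mk _ (PUnit.unit, t))
    exact this

/-- Index type: open neighborhoods of `b₀` paired with a natural number. -/
structure NbhdIdx (B : Type u) [TopologicalSpace B] (b₀ : B) : Type u where
  V : Set B
  isOpen' : IsOpen V
  mem' : b₀ ∈ V
  n : ℕ

instance (B : Type u) [TopologicalSpace B] (b₀ : B) : Preorder (NbhdIdx B b₀) where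
  le a b := b.V ⊆ a.V ∧ a.n ≤ b.n
  le_refl a := ⟨subset_rfl, le_rfl⟩
  le_trans a b c hab hbc := ⟨hbc.1.trans hab.1, hab.2.trans hbc.2⟩

instance (B : Type u) [TopologicalSpace B] (b₀ : B) :
    IsDirected (NbhdIdx B b₀) (· ≤ ·) :=
  ⟨fun a b => ⟨⟨a.V ∩ b.V, a.isOpen'.inter b.isOpen', ⟨a.mem', b.mem'⟩, max a.n b.n⟩,
    ⟨Set.inter_subset_left, le_max_left _ _⟩,
    ⟨Set.inter_subset_right, le_max_right _ _⟩⟩⟩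

lemma hedgehog_basis {E B : Type u} [TopologicalSpace E] [TopologicalSpace B]
    (p : C(E, B)) (hp : IsArcHedgehogCovering.{u} p) (e₀ : E) (U : Set E)
    (hUo : IsOpen U) (he₀ : e₀ ∈ U) :
    ∃ V : Set B, IsOpen V ∧ p e₀ ∈ V ∧ {y : E | JoinedIn (p ⁻¹' V) e₀ y} ⊆ U := by
  by_contra hcon
  push_neg at hcon
  set b₀ := p e₀ with hb₀
  set S : Type u := NbhdIdx B b₀ with hS
  have hbad : ∀ s : S, ∃ y, JoinedIn (p ⁻¹' s.V) e₀ y ∧ y ∉ U := by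
    intro s
    obtain ⟨y, hy1, hy2⟩ := Set.not_subset.mp (hcon s.V s.isOpen' s.mem')
    exact ⟨y, hy1, hy2⟩
  choose y hjoin hyU using hbad
  choose γ hγ using hjoin
  set z₀ : ArcHedgehog S := Quot.mk _ (⟨Set.univ, isOpen_univ, Set.mem_univ _, 0⟩, 0) with hz₀
  set f : C(ArcHedgehog S, B) :=
    { toFun := Quot.lift (fun x : S × I => p (γ x.1 x.2)) (by
        rintro x y (rfl | ⟨h1, h2⟩)
        · rfl
        · show p (γ x.1 x.2) = p (γ y.1 y.2)
          rw [h1, h2]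
          simp)
      continuous_toFun := by
        apply wedge_continuous
        · intro s
          exact p.continuous.comp (γ s).continuous
        · intro U' hU' hmem
          obtain ⟨s, hs⟩ := hmem
          have hb : b₀ ∈ U' := by simpa using hs
          refine ⟨⟨U', hU', hb, 0⟩, fun s' hs' a => ?_⟩
          have hle : s'.V ⊆ U' := (le_of_lt hs').1
          exact hle (hγ s' a) } with hf
  have hfz₀ : f z₀ = p e₀ := by show p (γ _ 0) = p e₀; simp
  obtain ⟨G, ⟨hG1, hG2⟩, -⟩ := hp S e₀ f z₀ hfz₀
  have hArc := isArcCovering_of_hedgehog p hp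
  -- each arm of G is the chosen path
  have harm : ∀ s : S, ∀ t : I, G (Quot.mk _ (s, t)) = γ s t := by
    intro s t
    set fV : C(I, B) := p.comp (γ s).toContinuousMap with hfV
    have h0 : fV 0 = p e₀ := by simp [hfV]
    obtain ⟨g!, -, huniq⟩ := hArc e₀ fV h0
    have e1 : G.comp (armMap s) = g! := by
      apply huniq
      constructor
      · ext u
        exact ContinuousMap.congr_fun hG1 (Quot.mk _ (s, u))
      · show G (Quot.mk _ (s, (0:I))) = e₀
        rw [show Quot.mk (wedgeRel S I 0) (s, (0:I)) = z₀ from wedge_base_eq s _, hG2]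
    have e2 : (γ s).toContinuousMap = g! := by
      apply huniq
      exact ⟨rfl, by simp⟩
    exact ContinuousMap.congr_fun (e1.trans e2.symm) t
  -- contradiction with continuity of G at the wedge point
  have hopen : IsOpen (G ⁻¹' U) := hUo.preimage G.continuous
  replace hopen := (wedge_isOpen_iff (S := S) (A := I) (a₀ := (0:I)) (G ⁻¹' U)).mp hopen
  obtain ⟨t, ht⟩ := hopen.2 ⟨⟨Set.univ, isOpen_univ, Set.mem_univ _, 0⟩, by
    show G (Quot.mk _ ((⟨Set.univ, isOpen_univ, Set.mem_univ _, 0⟩ : S), (0:I))) ∈ U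
    rw [show Quot.mk (wedgeRel S I 0) ((⟨Set.univ, isOpen_univ, Set.mem_univ _, 0⟩ : S), (0:I))
        = z₀ from rfl, hG2]
    exact he₀⟩
  set t' : S := ⟨t.V, t.isOpen', t.mem', t.n + 1⟩ with ht'
  have hlt : t < t' := by
    rw [lt_iff_le_not_ge]
    constructor
    · exact ⟨subset_rfl, Nat.le_succ _⟩
    · rintro ⟨-, h⟩
      exact Nat.not_succ_le_self t.n h
  have hmem := ht t' hlt 1
  replace hmem : G (Quot.mk (wedgeRel S I 0) (t', 1)) ∈ U := hmem
  rw [harm t' 1] at hmem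
  simp only [Path.target] at hmem
  exact hyU t' hmem


/-- fibers of an arc-hedgehog covering with Peano total space are
regular (`T₃`) zero-dimensional spaces. -/
theorem fibers_regular_zero_dim {E B : Type u} [TopologicalSpace E] [TopologicalSpace B]
    [ConnectedSpace E] [LocallyPathConnectedSpace E]
    (p : C(E, B)) (hp : IsArcHedgehogCovering.{u} p) :
    ∀ (b₀ : B) (x : ↥(p ⁻¹' {b₀})) (A : Set ↥(p ⁻¹' {b₀})), IsClosed A → x ∉ A →
      ∃ C : Set ↥(p ⁻¹' {b₀}), IsOpen C ∧ IsClosed C ∧ x ∈ C ∧ Disjoint C A := by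
  intro b₀ x A hA hxA
  have hpx : p x.1 = b₀ := x.2
  obtain ⟨U', hU'o, hU'⟩ := isOpen_induced_iff.mp hA.isOpen_compl
  have hxU' : (x : E) ∈ U' := by
    have : x ∈ Subtype.val ⁻¹' U' := by rw [hU']; exact hxA
    exact this
  obtain ⟨V, hVo, hbV, hVsub⟩ := hedgehog_basis p hp x.1 U' hU'o hxU'
  set O : Set E := p ⁻¹' V with hO
  have hOo : IsOpen O := hVo.preimage p.continuous
  have hFO : ∀ y : ↥(p ⁻¹' {b₀}), (y : E) ∈ O := by
    intro y
    show p y.1 ∈ V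
    rw [show p y.1 = b₀ from y.2, ← hpx]
    exact hbV
  set C : Set ↥(p ⁻¹' {b₀}) := Subtype.val ⁻¹' (pathComponentIn O (x : E)) with hC
  refine ⟨C, ?_, ?_, ?_, ?_⟩
  · exact (hOo.pathComponentIn _).preimage continuous_subtype_val
  · rw [← isOpen_compl_iff, isOpen_iff_mem_nhds]
    intro z hz
    have hzO : (z : E) ∈ O := hFO z
    have hQ : IsOpen (pathComponentIn O (z : E)) := hOo.pathComponentIn _
    refine Filter.mem_of_superset
      ((hQ.preimage continuous_subtype_val).mem_nhds (mem_pathComponentIn_self hzO)) ?_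
    intro w hw hwC
    apply hz
    have h1 : JoinedIn O (x : E) (w : E) := hwC
    have h2 : JoinedIn O (z : E) (w : E) := hw
    exact h1.trans h2.symm
  · exact mem_pathComponentIn_self (hFO x)
  · rw [Set.disjoint_left]
    intro w hwC hwA
    have h1 : JoinedIn (p ⁻¹' V) (x : E) (w : E) := hwC
    have h2 : (w : E) ∈ U' := hVsub h1
    have h3 : w ∈ Subtype.val ⁻¹' U' := h2
    rw [hU'] at h3
    exact h3 hwA
end

section
/- If p : E → B is an arc-hedgehog covering between Peano spaces and B is metrizable, then E is metrizable; a metric is given by d(x,y) = inf of r > 0 such that there is a path α from x to y in E with p(α([0,1])) contained in B(p(x),r) ∩ B(p(y),r). -/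
open unitInterval Topology

set_option linter.unnecessarySimpa false

universe u v w

/-- the total space of an arc-hedgehog covering of Peano spaces over a
metrizable base is metrizable, with metric given by the infimum of radii `r` over
paths from `x` to `y` projecting into `B(p x, r) ∩ B(p y, r)`. -/
theorem total_space_metrizable {E B : Type*} [tE : TopologicalSpace E] [MetricSpace B]
    [ConnectedSpace E] [LocallyPathConnectedSpace E] [ConnectedSpace B]
    [LocallyPathConnectedSpace B]
    (p : C(E, B)) (hp : IsArcCovering p) (hbasis : HedgehogBasisCondition p) :
    ∃ m : MetricSpace E, m.toUniformSpace.toTopologicalSpace = tE ∧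
      ∀ x y : E, m.toDist.dist x y = sInf {r : ℝ | 0 < r ∧ ∃ γ : Path x y,
        ∀ t : I, p (γ t) ∈ Metric.ball (p x) r ∩ Metric.ball (p y) r} := by
  classical
  haveI : PathConnectedSpace E := pathConnectedSpace_iff_connectedSpace.mpr ‹_›
  set Dset : E → E → Set ℝ := fun x y => {r : ℝ | 0 < r ∧ ∃ γ : Path x y,
    ∀ t : I, p (γ t) ∈ Metric.ball (p x) r ∩ Metric.ball (p y) r} with hDsetdef
  set D : E → E → ℝ := fun x y => sInf (Dset x y) with hDdef
  have hbdd : ∀ x y, BddBelow (Dset x y) := fun x y => ⟨0, fun r hr => hr.1.le⟩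
  have hne : ∀ x y, (Dset x y).Nonempty := by
    intro x y
    obtain ⟨γ⟩ : Joined x y := PathConnectedSpace.joined x y
    have hc : Continuous fun t : I => dist (p (γ t)) (p x) + dist (p (γ t)) (p y) := by
      fun_prop
    obtain ⟨t₀, -, ht₀⟩ := isCompact_univ.exists_isMaxOn Set.univ_nonempty hc.continuousOn
    refine ⟨dist (p (γ t₀)) (p x) + dist (p (γ t₀)) (p y) + 1, ?_, γ, fun t => ?_⟩
    · have h1 := dist_nonneg (x := p (γ t₀)) (y := p x)
      have h2 := dist_nonneg (x := p (γ t₀)) (y := p y)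
      linarith
    · have h : dist (p (γ t)) (p x) + dist (p (γ t)) (p y) ≤ dist (p (γ t₀)) (p x) + dist (p (γ t₀)) (p y) := ht₀ (Set.mem_univ t)
      have h1 := dist_nonneg (x := p (γ t)) (y := p x)
      have h2 := dist_nonneg (x := p (γ t)) (y := p y)
      constructor <;> simp only [Metric.mem_ball] <;> linarith
  have hup : ∀ x y r s, r ∈ Dset x y → r ≤ s → s ∈ Dset x y := by
    rintro x y r s ⟨hr, γ, hγ⟩ hrs
    exact ⟨lt_of_lt_of_le hr hrs, γ, fun t =>
      ⟨Metric.ball_subset_ball hrs (hγ t).1, Metric.ball_subset_ball hrs (hγ t).2⟩⟩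
  have hsub : ∀ x y, Dset x y ⊆ Dset y x := by
    rintro x y r ⟨hr, γ, hγ⟩
    refine ⟨hr, γ.symm, fun t => ?_⟩
    rw [Path.symm_apply]
    exact ⟨(hγ _).2, (hγ _).1⟩
  have hsymm : ∀ x y, Dset x y = Dset y x := fun x y =>
    (hsub x y).antisymm (hsub y x)
  have hcomm : ∀ x y, D x y = D y x := fun x y => congrArg sInf (hsymm x y)
  have hself : ∀ x, D x x = 0 := by
    intro x
    have h : Dset x x = Set.Ioi 0 := by
      ext r
      constructor
      · exact fun hr => hr.1
      · intro (hr : 0 < r)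
        refine ⟨hr, Path.refl x, fun t => ?_⟩
        simp [Metric.mem_ball, hr]
    show sInf (Dset x x) = 0
    rw [h]
    exact csInf_Ioi
  have htri : ∀ x y z, D x z ≤ D x y + D y z := by
    intro x y z
    have key : ∀ r ∈ Dset x y, ∀ s ∈ Dset y z, r + s ∈ Dset x z := by
      rintro r ⟨hr, γ, hγ⟩ s ⟨hs, δ, hδ⟩
      have hxy : dist (p y) (p x) < r := by
        have := (hγ 1).1; simpa [Metric.mem_ball] using this
      have hyz : dist (p y) (p z) < s := by
        have := (hδ 0).2; simpa [Metric.mem_ball] using this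
      have hγ' : ∀ u : I, p (γ u) ∈ Metric.ball (p x) (r + s) ∩ Metric.ball (p z) (r + s) := by
        intro u
        have h1 := (hγ u).1
        have h2 := (hγ u).2
        simp only [Set.mem_inter_iff, Metric.mem_ball] at h1 h2 ⊢
        refine ⟨by linarith, ?_⟩
        calc dist (p (γ u)) (p z) ≤ dist (p (γ u)) (p y) + dist (p y) (p z) :=
            dist_triangle _ _ _
          _ < r + s := by linarith
      have hδ' : ∀ u : I, p (δ u) ∈ Metric.ball (p x) (r + s) ∩ Metric.ball (p z) (r + s) := by
        intro u
        have h1 := (hδ u).1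
        have h2 := (hδ u).2
        simp only [Set.mem_inter_iff, Metric.mem_ball] at h1 h2 ⊢
        refine ⟨?_, by linarith⟩
        calc dist (p (δ u)) (p x) ≤ dist (p (δ u)) (p y) + dist (p y) (p x) :=
            dist_triangle _ _ _
          _ < r + s := by linarith
      refine ⟨by linarith, γ.trans δ, fun t => ?_⟩
      rw [Path.trans_apply]
      split_ifs with h
      · exact hγ' _
      · exact hδ' _
    refine le_of_forall_pos_le_add fun ε hε => ?_
    obtain ⟨r, hr, hrlt⟩ := exists_lt_of_csInf_lt (hne x y)
      (lt_add_of_pos_right _ (half_pos hε) : D x y < D x y + ε / 2)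
    obtain ⟨s, hs, hslt⟩ := exists_lt_of_csInf_lt (hne y z)
      (lt_add_of_pos_right _ (half_pos hε) : D y z < D y z + ε / 2)
    have hle : D x z ≤ r + s := csInf_le (hbdd x z) (key r hr s hs)
    linarith
  have hpeq : ∀ x y, D x y = 0 → p x = p y := by
    intro x y h
    have hle : dist (p x) (p y) ≤ 0 := by
      rw [← h]
      refine le_csInf (hne x y) ?_
      rintro r ⟨hr, γ, hγ⟩
      have := (hγ 1).1
      simp only [Metric.mem_ball, Path.target] at this
      rw [dist_comm] at this
      exact this.le
    exact dist_le_zero.mp hle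
  have hindist : ∀ x y, D x y = 0 → ∀ U : Set E, IsOpen U → x ∈ U → y ∈ U := by
    intro x y h U hU hxU
    obtain ⟨V, hV, hVsub⟩ := hbasis x U hU hxU
    obtain ⟨ε, hε, hball⟩ := Metric.mem_nhds_iff.mp hV
    obtain ⟨r, ⟨hr0, γ, hγ⟩, hrε⟩ := exists_lt_of_csInf_lt (hne x y)
      (show D x y < ε by rw [h]; exact hε)
    exact hVsub ⟨γ, fun t => hball (Metric.ball_subset_ball hrε.le (hγ t).1)⟩
  have heq : ∀ x y, D x y = 0 → x = y := by
    intro x y h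
    by_contra hxy
    have h' : D y x = 0 := by rw [hcomm y x]; exact h
    have hiff : ∀ U : Set E, IsOpen U → (x ∈ U ↔ y ∈ U) := fun U hU =>
      ⟨hindist x y h U hU, hindist y x h' U hU⟩
    have hpxy := hpeq x y h
    have hcont : Continuous fun t : I => if t = 1 then y else x := by
      rw [continuous_def]
      intro U hU
      by_cases hx : x ∈ U
      · have hy : y ∈ U := (hiff U hU).mp hx
        have : (fun t : I => if t = 1 then y else x) ⁻¹' U = Set.univ :=
          Set.eq_univ_of_forall fun t => by
            simp only [Set.mem_preimage]; split_ifs <;> assumption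
        rw [this]; exact isOpen_univ
      · have hy : y ∉ U := fun hy => hx ((hiff U hU).mpr hy)
        have : (fun t : I => if t = 1 then y else x) ⁻¹' U = ∅ := by
          refine Set.eq_empty_iff_forall_notMem.mpr fun t ht => ?_
          simp only [Set.mem_preimage] at ht
          split_ifs at ht
          · exact hy ht
          · exact hx ht
        rw [this]; exact isOpen_empty
    set g : C(I, E) := ⟨fun t => if t = 1 then y else x, hcont⟩ with hgdef
    have h01 : (0 : I) ≠ 1 := fun hc => one_ne_zero (congrArg Subtype.val hc.symm)
    obtain ⟨g₀, -, huniq⟩ := hp x (ContinuousMap.const I (p x)) rfl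
    have h1 : g = g₀ := by
      refine huniq g ⟨?_, ?_⟩
      · ext t
        show p (if t = 1 then y else x) = p x
        split_ifs
        · exact hpxy.symm
        · rfl
      · show (if (0 : I) = 1 then y else x) = x
        rw [if_neg h01]
    have h2 : ContinuousMap.const I x = g₀ := by
      refine huniq _ ⟨?_, rfl⟩
      ext t; rfl
    have : g 1 = x := by rw [h1, ← h2]; rfl
    exact hxy (by simpa [hgdef] using this.symm)
  have H : ∀ s : Set E, IsOpen s ↔ ∀ x ∈ s, ∃ ε > 0, ∀ y, D x y < ε → y ∈ s := by
    intro s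
    constructor
    · intro hs x hx
      obtain ⟨V, hV, hVsub⟩ := hbasis x s hs hx
      obtain ⟨ε, hε, hball⟩ := Metric.mem_nhds_iff.mp hV
      refine ⟨ε, hε, fun y hy => ?_⟩
      obtain ⟨r, ⟨hr0, γ, hγ⟩, hrε⟩ := exists_lt_of_csInf_lt (hne x y) hy
      exact hVsub ⟨γ, fun t => hball (Metric.ball_subset_ball hrε.le (hγ t).1)⟩
    · intro hs
      rw [isOpen_iff_mem_nhds]
      intro x hx
      obtain ⟨ε, hε, hball⟩ := hs x hx
      have hopen : IsOpen (pathComponentIn (p ⁻¹' Metric.ball (p x) (ε / 4)) x) :=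
        (Metric.isOpen_ball.preimage p.continuous).pathComponentIn x
      have hxmem : x ∈ p ⁻¹' Metric.ball (p x) (ε / 4) := by
        simp only [Set.mem_preimage, Metric.mem_ball, dist_self]
        linarith
      refine Filter.mem_of_superset (hopen.mem_nhds (mem_pathComponentIn_self hxmem)) ?_
      intro y hy
      obtain ⟨γ, hγ⟩ := (hy : JoinedIn _ x y)
      apply hball y
      have h2 : dist (p x) (p y) < ε / 4 := by
        have := hγ 1
        simp only [Set.mem_preimage, Metric.mem_ball, Path.target] at this
        rw [dist_comm] at this
        exact this
      have hmem : ε / 2 ∈ Dset x y := by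
        refine ⟨by linarith, γ, fun t => ?_⟩
        have h1 : dist (p (γ t)) (p x) < ε / 4 := by
          have := hγ t
          simpa only [Set.mem_preimage, Metric.mem_ball] using this
        refine ⟨?_, ?_⟩
        · simp only [Metric.mem_ball]; linarith
        · simp only [Metric.mem_ball]
          calc dist (p (γ t)) (p y) ≤ dist (p (γ t)) (p x) + dist (p x) (p y) :=
              dist_triangle _ _ _
            _ < ε / 2 := by linarith
      have : D x y ≤ ε / 2 := csInf_le (hbdd x y) hmem
      linarith
  exact ⟨MetricSpace.ofDistTopology D hself hcomm htri H heq, rfl, fun x y => rfl⟩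
end

section
/- If p : E → B is a disk-hedgehog covering of a path-connected space B, then every small loop α at b₀ ∈ B (a loop homotopable rel b₀ into every neighborhood of b₀) represents the neutral element of the monodromy group π(p,b₀); i.e., every lift of α is a loop. -/
open unitInterval Topology

set_option linter.unnecessarySimpa false

universe u v w

section Aux

namespace SmallLoopAux

open Set

/-- A point of the disk from two coordinates. -/
noncomputable def diskPt (a b : ℝ) (h : a ^ 2 + b ^ 2 ≤ 1) : Disk :=
  ⟨(WithLp.toLp 2 (fun i : Fin 2 => if i = 0 then a else b) : EuclideanSpace ℝ (Fin 2)), by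
    rw [Metric.mem_closedBall, dist_zero_right, EuclideanSpace.norm_eq, Fin.sum_univ_two]
    simp only [PiLp.toLp_apply, if_pos rfl, if_neg (by decide : (1 : Fin 2) ≠ 0), Real.norm_eq_abs, sq_abs]
    calc Real.sqrt (a ^ 2 + b ^ 2) ≤ Real.sqrt 1 := Real.sqrt_le_sqrt h
      _ = 1 := Real.sqrt_one⟩

lemma diskPt_coord0 (a b : ℝ) (h : a ^ 2 + b ^ 2 ≤ 1) : (diskPt a b h).1 0 = a := rfl

lemma diskPt_coord1 (a b : ℝ) (h : a ^ 2 + b ^ 2 ≤ 1) : (diskPt a b h).1 1 = b := rfl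

lemma diskPt_eq {a b a' b' : ℝ} {h : a ^ 2 + b ^ 2 ≤ 1} {h' : a' ^ 2 + b' ^ 2 ≤ 1}
    (ha : a = a') (hb : b = b') : diskPt a b h = diskPt a' b' h' := by
  subst ha; subst hb; rfl

lemma diskPt_zero_zero : diskPt 0 0 (by norm_num) = Disk.center := by
  apply Subtype.ext
  ext i
  show (if i = 0 then (0:ℝ) else 0) = (0 : EuclideanSpace ℝ (Fin 2)) i
  simp

lemma continuous_diskPt {X : Type*} [TopologicalSpace X] {f g : X → ℝ}
    (hf : Continuous f) (hg : Continuous g) (h : ∀ x, (f x) ^ 2 + (g x) ^ 2 ≤ 1) :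
    Continuous fun x => diskPt (f x) (g x) (h x) := by
  apply Continuous.subtype_mk
  show Continuous fun x => (WithLp.toLp 2 (fun i : Fin 2 => if i = 0 then f x else g x) : EuclideanSpace ℝ (Fin 2))
  exact (PiLp.continuous_toLp 2 _).comp <| continuous_pi fun i => by by_cases hi : i = 0 <;> simp [hi, hf, hg]

/-- Retraction of the disk onto `I` using the first coordinate. -/
noncomputable def diskR : C(Disk, I) :=
  ⟨fun d => projIcc 0 1 zero_le_one (d.1 0),
    continuous_projIcc.comp (((continuous_apply (0 : Fin 2)).comp ((PiLp.continuous_ofLp 2 _).comp continuous_subtype_val) : Continuous fun d : Disk => d.1 0))⟩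

lemma diskR_diskPt (t : I) (b : ℝ) (h : ((t:ℝ)) ^ 2 + b ^ 2 ≤ 1) :
    diskR (diskPt (t : ℝ) b h) = t := by
  show projIcc 0 1 zero_le_one ((diskPt (t:ℝ) b h).1 0) = t
  rw [diskPt_coord0]
  exact projIcc_val zero_le_one t

lemma diskR_center : diskR Disk.center = 0 := by
  rw [← diskPt_zero_zero]
  exact diskR_diskPt 0 0 (by norm_num)

end SmallLoopAux
end Aux

section Aux2
namespace SmallLoopAux
open Set

instance : IsDirected PUnit.{u+1} (· ≤ ·) := ⟨fun a _ => ⟨a, le_refl _, le_refl _⟩⟩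

/-- The map collapsing the one-disk hedgehog to the disk. -/
noncomputable def hedgehogToDisk : C(DiskHedgehog PUnit.{u+1}, Disk) :=
  ⟨Quot.lift Prod.snd (by
    rintro x y (rfl | ⟨h1, h2⟩)
    · rfl
    · exact h1.trans h2.symm), by
    refine continuous_def.mpr ?_
    intro W hW
    show IsOpen[Wedge.instTopologicalSpace PUnit Disk Disk.center] _
    refine ⟨fun s => hW, fun _ => ⟨PUnit.unit, fun s hs a => absurd hs (by simp)⟩⟩⟩

/-- The inclusion of a disk as the `s`-th copy in a hedgehog. -/
noncomputable def diskToHedgehog {S : Type u} [Preorder S] [IsDirected S (· ≤ ·)] (s : S) :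
    C(Disk, DiskHedgehog S) :=
  ⟨fun d => Quot.mk (wedgeRel S Disk Disk.center) (s, d), by
    refine continuous_def.mpr ?_
    intro U hU
    exact hU.1 s⟩

lemma hedgehog_punit_left (z : DiskHedgehog PUnit.{u+1}) :
    diskToHedgehog PUnit.unit (hedgehogToDisk z) = z := by
  induction z using Quot.ind with
  | _ x => rfl

/-- A disk-hedgehog covering is a disk covering. -/
theorem isDiskCovering {E B : Type u} [TopologicalSpace E] [TopologicalSpace B]
    (p : C(E, B)) (hp : IsDiskHedgehogCovering.{u} p) : IsDiskCovering p := by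
  intro e₀ f d₀ hfd
  obtain ⟨G, ⟨hG1, hG2⟩, hGu⟩ := hp PUnit.{u+1} e₀ (f.comp hedgehogToDisk)
    (diskToHedgehog PUnit.unit d₀) (by exact hfd)
  refine ⟨G.comp (diskToHedgehog PUnit.unit), ⟨?_, ?_⟩, ?_⟩
  · ext d
    have := ContinuousMap.congr_fun hG1 (diskToHedgehog PUnit.unit d)
    exact this
  · exact hG2
  · intro g' ⟨hg'1, hg'2⟩
    have := hGu (g'.comp hedgehogToDisk) ⟨by ext z; simpa using ContinuousMap.congr_fun hg'1 (hedgehogToDisk z), by exact hg'2⟩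
    ext d
    calc g' d = (g'.comp hedgehogToDisk) (diskToHedgehog PUnit.unit d) := rfl
      _ = G (diskToHedgehog PUnit.unit d) := by rw [this]
      _ = _ := rfl

/-- Unique path lifting from disk covering. -/
theorem pathLift_unique {E B : Type u} [TopologicalSpace E] [TopologicalSpace B]
    (p : C(E, B)) (hp : IsDiskCovering p) (f : C(I, B)) (k₁ k₂ : C(I, E))
    (h1 : ∀ t, p (k₁ t) = f t) (h2 : ∀ t, p (k₂ t) = f t) (h0 : k₁ 0 = k₂ 0) :
    ∀ t, k₁ t = k₂ t := by
  have hfc : (f.comp diskR) Disk.center = p (k₁ 0) := by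
    simp [diskR_center, h1 0]
  obtain ⟨G, -, hGu⟩ := hp (k₁ 0) (f.comp diskR) Disk.center hfc
  have e1 : k₁.comp diskR = G := hGu _ ⟨by ext d; exact h1 _, by rw [ContinuousMap.comp_apply, diskR_center]⟩
  have e2 : k₂.comp diskR = G := hGu _ ⟨by ext d; exact h2 _, by rw [ContinuousMap.comp_apply, diskR_center, ← h0]⟩
  intro t
  have ht : ((t:ℝ)) ^ 2 + (0:ℝ) ^ 2 ≤ 1 := by nlinarith [t.2.1, t.2.2]
  have := ContinuousMap.congr_fun (e1.trans e2.symm) (diskPt (t:ℝ) 0 ht)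
  simpa [ContinuousMap.comp_apply, diskR_diskPt] using this

end SmallLoopAux
end Aux2

section Aux3
namespace SmallLoopAux
open Set

/-- The square-onto-disk quotient-ish map. -/
noncomputable def diskSq : C(Disk, I × I) :=
  ⟨fun d => (projIcc 0 1 zero_le_one (d.1 0 + 1/2), projIcc 0 1 zero_le_one (d.1 1 + 1/2)),
    Continuous.prodMk
      (continuous_projIcc.comp ((((continuous_apply (0 : Fin 2)).comp ((PiLp.continuous_ofLp 2 _).comp continuous_subtype_val) :
        Continuous fun d : Disk => d.1 0)).add continuous_const))
      (continuous_projIcc.comp ((((continuous_apply (1 : Fin 2)).comp ((PiLp.continuous_ofLp 2 _).comp continuous_subtype_val) :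
        Continuous fun d : Disk => d.1 1)).add continuous_const))⟩

lemma sq_mem (u v : I) : ((u:ℝ) - 1/2) ^ 2 + ((v:ℝ) - 1/2) ^ 2 ≤ 1 := by
  nlinarith [u.2.1, u.2.2, v.2.1, v.2.2]

lemma projIcc_shift (t : I) : projIcc (0:ℝ) 1 zero_le_one ((t:ℝ) - 1/2 + 1/2) = t := by
  rw [sub_add_cancel]
  exact projIcc_val zero_le_one t

lemma diskSq_pt (u v : I) :
    diskSq (diskPt ((u:ℝ) - 1/2) ((v:ℝ) - 1/2) (sq_mem u v)) = (u, v) := by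
  show (projIcc 0 1 zero_le_one ((diskPt _ _ _).1 0 + 1/2),
    projIcc 0 1 zero_le_one ((diskPt _ _ _).1 1 + 1/2)) = (u, v)
  rw [diskPt_coord0, diskPt_coord1, projIcc_shift, projIcc_shift]

/-- Transport of lift endpoints along a homotopy rel endpoints. -/
theorem lift_homotopic {E B : Type u} [TopologicalSpace E] [TopologicalSpace B]
    (p : C(E, B)) (hp : IsDiskCovering p) {b₀ : B} (α β : Path b₀ b₀)
    (hom : α.Homotopic β) (g : C(I, E)) (hg : ∀ t, p (g t) = α t) :
    ∃ h : C(I, E), (∀ t, p (h t) = β t) ∧ h 0 = g 0 ∧ h 1 = g 1 := by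
  obtain ⟨H⟩ := hom
  -- curves in the disk
  have m00 : ∀ v : I, ((((0:I):ℝ)) - 1/2) ^ 2 + ((v:ℝ) - 1/2) ^ 2 ≤ 1 := fun v => sq_mem 0 v
  set c : I → I → Disk := fun u v => diskPt ((u:ℝ) - 1/2) ((v:ℝ) - 1/2) (sq_mem u v) with hc
  have hcc : ∀ u : I, Continuous fun v => c u v := fun u =>
    continuous_diskPt continuous_const (continuous_induced_dom.sub continuous_const) _
  have hcc' : ∀ v : I, Continuous fun u => c u v := fun v =>
    continuous_diskPt (continuous_induced_dom.sub continuous_const) continuous_const _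
  set fD : C(Disk, B) := H.toContinuousMap.comp diskSq with hfD
  have hfDc : ∀ u v : I, fD (c u v) = H (u, v) := by
    intro u v
    show H.toContinuousMap (diskSq (c u v)) = _
    rw [hc, diskSq_pt]
    rfl
  have hcorner : fD (c 0 0) = p (g 0) := by
    rw [hfDc, hg 0]
    exact H.apply_zero 0
  obtain ⟨G, ⟨hG1, hG2⟩, -⟩ := hp (g 0) fD (c 0 0) hcorner
  have hGl : ∀ (x : Disk), p (G x) = fD x := fun x => ContinuousMap.congr_fun hG1 x
  -- bottom curve (u = 0) lifts α and starts at g 0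
  have hbot : ∀ v : I, G (c 0 v) = g v := by
    apply pathLift_unique p hp α.toContinuousMap ⟨fun v => G (c 0 v), (G.continuous).comp (hcc 0)⟩ g
    · intro v
      show p (G (c 0 v)) = α v
      rw [hGl, hfDc]
      exact H.apply_zero v
    · exact hg
    · exact hG2
  -- left curve (v = 0) is constant g 0
  have hleft : ∀ u : I, G (c u 0) = g 0 := by
    apply pathLift_unique p hp (ContinuousMap.const I b₀)
      ⟨fun u => G (c u 0), (G.continuous).comp (hcc' 0)⟩ (ContinuousMap.const I (g 0))
    · intro u
      show p (G (c u 0)) = b₀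
      rw [hGl, hfDc]
      exact (H.eq_fst u (show (0:I) ∈ ({0,1} : Set I) from Or.inl rfl)).trans α.source
    · intro u
      show p (g 0) = b₀
      rw [hg 0, α.source]
    · exact hG2
  -- right curve (v = 1) is constant g 1
  have hright : ∀ u : I, G (c u 1) = g 1 := by
    apply pathLift_unique p hp (ContinuousMap.const I b₀)
      ⟨fun u => G (c u 1), (G.continuous).comp (hcc' 1)⟩ (ContinuousMap.const I (g 1))
    · intro u
      show p (G (c u 1)) = b₀
      rw [hGl, hfDc]
      exact (H.eq_fst u (show (1:I) ∈ ({0,1} : Set I) by simp)).trans α.target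
    · intro u
      show p (g 1) = b₀
      rw [hg 1, α.target]
    · show G (c 0 1) = g 1
      rw [hbot 1]
  -- top curve (u = 1) is the lift of β
  refine ⟨⟨fun v => G (c 1 v), (G.continuous).comp (hcc 1)⟩, ?_, ?_, ?_⟩
  · intro v
    show p (G (c 1 v)) = β v
    rw [hGl, hfDc]
    exact H.apply_one v
  · exact hleft 1
  · exact hright 1

end SmallLoopAux
end Aux3

section Aux4
namespace SmallLoopAux
open Set

/-- Directed index: neighborhoods of `b₀` (ordered by reverse inclusion) times `ℕ`. -/
def NhdsIndex {B : Type u} [TopologicalSpace B] (b₀ : B) : Type u :=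
  {V : Set B // V ∈ 𝓝 b₀} × ℕ

instance {B : Type u} [TopologicalSpace B] (b₀ : B) : Preorder (NhdsIndex b₀) where
  le x y := y.1.1 ⊆ x.1.1 ∧ x.2 ≤ y.2
  le_refl x := ⟨subset_rfl, le_rfl⟩
  le_trans x y z h1 h2 := ⟨h2.1.trans h1.1, h1.2.trans h2.2⟩

instance {B : Type u} [TopologicalSpace B] (b₀ : B) :
    IsDirected (NhdsIndex b₀) (· ≤ ·) :=
  ⟨fun x y => ⟨⟨⟨x.1.1 ∩ y.1.1, Filter.inter_mem x.1.2 y.1.2⟩, max x.2 y.2⟩,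
    ⟨Set.inter_subset_left, le_max_left _ _⟩, ⟨Set.inter_subset_right, le_max_right _ _⟩⟩⟩

lemma unitSq_mem (t : I) : ((t:ℝ)) ^ 2 + (0:ℝ) ^ 2 ≤ 1 := by
  nlinarith [t.2.1, t.2.2]

lemma diskPt_unit_zero : diskPt ((0:I):ℝ) 0 (unitSq_mem 0) = Disk.center :=
  (diskPt_eq (by norm_num) rfl).trans diskPt_zero_zero

end SmallLoopAux
end Aux4

/-- every small loop at `b₀` represents the neutral element of the
monodromy group of any disk-hedgehog covering: all its lifts are loops. -/
theorem small_loops_trivial {E B : Type u} [TopologicalSpace E] [TopologicalSpace B]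
    [PathConnectedSpace B]
    (p : C(E, B)) (hp : IsDiskHedgehogCovering.{u} p) (b₀ : B) (α : Path b₀ b₀)
    (hsmall : ∀ U ∈ nhds b₀, ∃ β : Path b₀ b₀, (∀ t, β t ∈ U) ∧ α.Homotopic β) :
    ∀ g : C(I, E), (∀ t, p (g t) = α t) → g 0 = g 1 := by
  classical
  intro g hg
  have hdc := SmallLoopAux.isDiskCovering p hp
  have hb0 : p (g 0) = b₀ := by rw [hg 0]; exact α.source
  have hb1 : p (g 1) = b₀ := by rw [hg 1]; exact α.target
  -- small representatives indexed by the directed set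
  have hβ : ∀ s : (SmallLoopAux.NhdsIndex b₀), ∃ β : Path b₀ b₀, (∀ t, β t ∈ s.1.1) ∧ α.Homotopic β :=
    fun s => hsmall s.1.1 s.1.2
  set β : (SmallLoopAux.NhdsIndex b₀) → Path b₀ b₀ := fun s => (hβ s).choose with hβdef
  have hβmem : ∀ s : (SmallLoopAux.NhdsIndex b₀), ∀ t, β s t ∈ s.1.1 := fun s => (hβ s).choose_spec.1
  have hβhom : ∀ s : (SmallLoopAux.NhdsIndex b₀), α.Homotopic (β s) := fun s => (hβ s).choose_spec.2
  -- lifts of the small representatives with the same endpoints as g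
  have hh : ∀ s : (SmallLoopAux.NhdsIndex b₀), ∃ h : C(I, E), (∀ t, p (h t) = β s t) ∧ h 0 = g 0 ∧ h 1 = g 1 :=
    fun s => SmallLoopAux.lift_homotopic p hdc α (β s) (hβhom s) g hg
  set hfun : (SmallLoopAux.NhdsIndex b₀) → C(I, E) := fun s => (hh s).choose with hhdef
  have hflift : ∀ s : (SmallLoopAux.NhdsIndex b₀), ∀ t, p (hfun s t) = β s t := fun s => (hh s).choose_spec.1
  have hf0 : ∀ s : (SmallLoopAux.NhdsIndex b₀), hfun s 0 = g 0 := fun s => (hh s).choose_spec.2.1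
  have hf1 : ∀ s : (SmallLoopAux.NhdsIndex b₀), hfun s 1 = g 1 := fun s => (hh s).choose_spec.2.2
  -- the hedgehog map
  have Fwd : ∀ (x y : (SmallLoopAux.NhdsIndex b₀) × Disk), wedgeRel (SmallLoopAux.NhdsIndex b₀) Disk Disk.center x y →
      β x.1 (SmallLoopAux.diskR x.2) = β y.1 (SmallLoopAux.diskR y.2) := by
    rintro x y (rfl | ⟨h1, h2⟩)
    · rfl
    · rw [h1, h2, SmallLoopAux.diskR_center, (β x.1).source, (β y.1).source]
  have hFcont : Continuous (X := DiskHedgehog (SmallLoopAux.NhdsIndex b₀)) (Quot.lift (fun x : (SmallLoopAux.NhdsIndex b₀) × Disk => β x.1 (SmallLoopAux.diskR x.2)) Fwd) := by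
    refine continuous_def.mpr ?_
    intro W hW
    show (∀ s : (SmallLoopAux.NhdsIndex b₀), IsOpen {a : Disk | Quot.mk (wedgeRel (SmallLoopAux.NhdsIndex b₀) Disk Disk.center) (s, a) ∈
        Quot.lift (fun x : (SmallLoopAux.NhdsIndex b₀) × Disk => β x.1 (SmallLoopAux.diskR x.2)) Fwd ⁻¹' W}) ∧
      ((∃ s : (SmallLoopAux.NhdsIndex b₀), Quot.mk (wedgeRel (SmallLoopAux.NhdsIndex b₀) Disk Disk.center) (s, Disk.center) ∈
        Quot.lift (fun x : (SmallLoopAux.NhdsIndex b₀) × Disk => β x.1 (SmallLoopAux.diskR x.2)) Fwd ⁻¹' W) →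
      ∃ t : (SmallLoopAux.NhdsIndex b₀), ∀ s : (SmallLoopAux.NhdsIndex b₀), t < s → ∀ a : Disk, Quot.mk (wedgeRel (SmallLoopAux.NhdsIndex b₀) Disk Disk.center) (s, a) ∈
        Quot.lift (fun x : (SmallLoopAux.NhdsIndex b₀) × Disk => β x.1 (SmallLoopAux.diskR x.2)) Fwd ⁻¹' W)
    constructor
    · intro s
      exact ((β s).continuous.comp SmallLoopAux.diskR.continuous).isOpen_preimage W hW
    · rintro ⟨s, hs⟩
      have hbW : b₀ ∈ W := by
        have h1 : β s (SmallLoopAux.diskR Disk.center) ∈ W := hs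
        rwa [SmallLoopAux.diskR_center, (β s).source] at h1
      refine ⟨(⟨W, hW.mem_nhds hbW⟩, 0), fun s' hs' a => ?_⟩
      exact hs'.le.1 (hβmem s' (SmallLoopAux.diskR a))
  set F : C(DiskHedgehog (SmallLoopAux.NhdsIndex b₀), B) :=
    ⟨Quot.lift (fun x : (SmallLoopAux.NhdsIndex b₀) × Disk => β x.1 (SmallLoopAux.diskR x.2)) Fwd, hFcont⟩ with hFdef
  set s₀ : (SmallLoopAux.NhdsIndex b₀) := (⟨Set.univ, Filter.univ_mem⟩, 0) with hs₀
  set z₀ : DiskHedgehog (SmallLoopAux.NhdsIndex b₀) := Quot.mk (wedgeRel (SmallLoopAux.NhdsIndex b₀) Disk Disk.center) (s₀, Disk.center) with hz₀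
  have hFz : F z₀ = p (g 0) := by
    show β s₀ (SmallLoopAux.diskR Disk.center) = p (g 0)
    rw [SmallLoopAux.diskR_center, (β s₀).source, hb0]
  obtain ⟨G, ⟨hG1, hG2⟩, -⟩ := hp (SmallLoopAux.NhdsIndex b₀) (g 0) F z₀ hFz
  have hGl : ∀ x, p (G x) = F x := fun x => ContinuousMap.congr_fun hG1 x
  -- arcs in the hedgehog
  have hmk_center : ∀ s : (SmallLoopAux.NhdsIndex b₀), Quot.mk (wedgeRel (SmallLoopAux.NhdsIndex b₀) Disk Disk.center) (s, Disk.center) = z₀ :=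
    fun s => Quot.sound (Or.inr ⟨rfl, rfl⟩)
  have harc : ∀ s : (SmallLoopAux.NhdsIndex b₀), ∀ t : I,
      G (Quot.mk (wedgeRel (SmallLoopAux.NhdsIndex b₀) Disk Disk.center)
        (s, SmallLoopAux.diskPt (t:ℝ) 0 (SmallLoopAux.unitSq_mem t))) = hfun s t := by
    intro s
    apply SmallLoopAux.pathLift_unique p hdc (β s).toContinuousMap
      ⟨fun t => G (Quot.mk (wedgeRel (SmallLoopAux.NhdsIndex b₀) Disk Disk.center)
        (s, SmallLoopAux.diskPt (t:ℝ) 0 (SmallLoopAux.unitSq_mem t))), by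
        exact (G.continuous.comp (SmallLoopAux.diskToHedgehog s).continuous).comp
          (SmallLoopAux.continuous_diskPt continuous_subtype_val continuous_const (fun t => SmallLoopAux.unitSq_mem t))⟩
      (hfun s)
    · intro t
      show p (G _) = β s t
      refine (hGl _).trans ?_
      show β s (SmallLoopAux.diskR (SmallLoopAux.diskPt (t:ℝ) 0 (SmallLoopAux.unitSq_mem t))) = β s t
      rw [SmallLoopAux.diskR_diskPt]
    · exact hflift s
    · show G (Quot.mk (wedgeRel (SmallLoopAux.NhdsIndex b₀) Disk Disk.center)
        (s, SmallLoopAux.diskPt ((0:I):ℝ) 0 (SmallLoopAux.unitSq_mem 0))) = hfun s 0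
      rw [SmallLoopAux.diskPt_unit_zero, hmk_center, hG2, hf0]
  -- every open set containing g 0 contains g 1
  have key : ∀ U : Set E, IsOpen U → g 0 ∈ U → g 1 ∈ U := by
    intro U hU hU0
    have hGU : IsOpen (G ⁻¹' U) := hU.preimage G.continuous
    have hGU' : (∀ s : (SmallLoopAux.NhdsIndex b₀), IsOpen {a : Disk | Quot.mk (wedgeRel (SmallLoopAux.NhdsIndex b₀) Disk Disk.center) (s, a) ∈
        G ⁻¹' U}) ∧
      ((∃ s : (SmallLoopAux.NhdsIndex b₀), Quot.mk (wedgeRel (SmallLoopAux.NhdsIndex b₀) Disk Disk.center) (s, Disk.center) ∈ G ⁻¹' U) →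
      ∃ t : (SmallLoopAux.NhdsIndex b₀), ∀ s : (SmallLoopAux.NhdsIndex b₀), t < s → ∀ a : Disk,
        Quot.mk (wedgeRel (SmallLoopAux.NhdsIndex b₀) Disk Disk.center) (s, a) ∈ G ⁻¹' U) := hGU
    obtain ⟨t, ht⟩ := hGU'.2 ⟨s₀, by show G z₀ ∈ U; rw [hG2]; exact hU0⟩
    have hlt : t < (t.1, t.2 + 1) :=
      lt_of_le_not_ge ⟨subset_rfl, Nat.le_succ _⟩ (fun h => Nat.not_succ_le_self t.2 h.2)
    have hmem := ht (t.1, t.2 + 1) hlt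
      (SmallLoopAux.diskPt ((1:I):ℝ) 0 (SmallLoopAux.unitSq_mem 1))
    have hmem' : G (Quot.mk (wedgeRel (SmallLoopAux.NhdsIndex b₀) Disk Disk.center)
        ((t.1, t.2 + 1), SmallLoopAux.diskPt ((1:I):ℝ) 0 (SmallLoopAux.unitSq_mem 1))) ∈ U := hmem
    rw [harc (t.1, t.2 + 1) 1, hf1] at hmem'
    exact hmem'
  -- conclude by unique path lifting
  have hone : (1 : I) ≠ 0 := fun h => by
    have := congrArg (Subtype.val) h
    norm_num at this
  have hkc : Continuous (fun t : I => if t = 0 then g 0 else g 1) := by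
    rw [continuous_def]
    intro U hU
    by_cases h0 : g 0 ∈ U
    · have h1 := key U hU h0
      have : (fun t : I => if t = 0 then g 0 else g 1) ⁻¹' U = Set.univ := by
        ext t; simp only [Set.mem_preimage, Set.mem_univ, iff_true]
        split_ifs <;> assumption
      rw [this]; exact isOpen_univ
    · by_cases h1 : g 1 ∈ U
      · have : (fun t : I => if t = 0 then g 0 else g 1) ⁻¹' U = {(0:I)}ᶜ := by
          ext t
          simp only [Set.mem_preimage, Set.mem_compl_iff, Set.mem_singleton_iff]
          split_ifs with h <;> simp [h, h0, h1]
        rw [this]; exact isOpen_compl_singleton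
      · have : (fun t : I => if t = 0 then g 0 else g 1) ⁻¹' U = ∅ := by
          ext t
          simp only [Set.mem_preimage, Set.mem_empty_iff_false, iff_false]
          split_ifs <;> assumption
        rw [this]; exact isOpen_empty
  have hfin := SmallLoopAux.pathLift_unique p hdc (ContinuousMap.const I b₀)
    ⟨fun t : I => if t = 0 then g 0 else g 1, hkc⟩ (ContinuousMap.const I (g 0))
    (fun t => by
      show p (if t = 0 then g 0 else g 1) = b₀
      split_ifs
      · exact hb0
      · exact hb1)
    (fun t => hb0)
    (by show (if (0:I) = 0 then g 0 else g 1) = g 0; rw [if_pos rfl]) 1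
  have : (if (1:I) = 0 then g 0 else g 1) = g 0 := hfin
  rw [if_neg hone] at this
  exact this.symm
end
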